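/- The number of standard Young tableaux of rectangular shape (n, n, n) equals 2·(3n)! / (n!·(n+1)!·(n+2)!). -/

import Mathlib

/-- A word `w : Fin n → ℕ` is a permutation of length `n` (1-indexed values). -/
def IsPermWord (n : ℕ) (w : Fin n → ℕ) : Prop :=
  Function.Injective w ∧ Set.range w = Set.Icc 1 n

/-- `w` contains the pattern 2143. -/
def Contains2143 {n : ℕ} (w : Fin n → ℕ) : Prop :=
  ∃ i1 i2 i3 i4 : Fin n, i1 < i2 ∧ i2 < i3 ∧ i3 < i4 ∧
    w i2 < w i1 ∧ w i1 < w i4 ∧ w i4 < w i3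

/-- `w` contains the pattern 1234 (a four-term increasing subsequence). -/
def Contains1234 {n : ℕ} (w : Fin n → ℕ) : Prop :=
  ∃ i1 i2 i3 i4 : Fin n, i1 < i2 ∧ i2 < i3 ∧ i3 < i4 ∧
    w i1 < w i2 ∧ w i2 < w i3 ∧ w i3 < w i4

/-- `w` contains the pattern `p`. -/
def ContainsPat {n k : ℕ} (w : Fin n → ℕ) (p : Fin k → ℕ) : Prop :=
  ∃ f : Fin k → Fin n, StrictMono f ∧ ∀ a b : Fin k, p a < p b ↔ w (f a) < w (f b)

/-- The extension `w ← c`: bump every entry `≥ c` by one and append `c`. -/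
def extendBy {n : ℕ} (w : Fin n → ℕ) (c : ℕ) : Fin (n + 1) → ℕ :=
  fun j => if h : (j : ℕ) < n then (if c ≤ w ⟨j, h⟩ then w ⟨j, h⟩ + 1 else w ⟨j, h⟩) else c

/-- `c` is an active value for `w` (with respect to the pattern 2143). -/
def IsActive {n : ℕ} (w : Fin n → ℕ) (c : ℕ) : Prop :=
  ¬ Contains2143 (extendBy w c)

/-- `w` is (up-down) alternating: `w 1 < w 2 > w 3 < w 4 > ...` (1-indexed). -/
def Alternating {n : ℕ} (w : Fin n → ℕ) : Prop :=
  ∀ (i : ℕ) (h : i + 1 < n),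
    if i % 2 = 0 then w ⟨i, by omega⟩ < w ⟨i + 1, h⟩ else w ⟨i + 1, h⟩ < w ⟨i, by omega⟩

/-- The set of active values for `w` among `{1, ..., n+1}`. -/
def activeSet {n : ℕ} (w : Fin n → ℕ) : Set ℕ :=
  {c | 1 ≤ c ∧ c ≤ n + 1 ∧ IsActive w c}

/-- The reverse-complement of a word of length `m` (1-indexed values). -/
def revComp {m : ℕ} (w : Fin m → ℕ) : Fin m → ℕ :=
  fun i => m + 1 - w i.rev

/-- `T` is a standard Young tableau of rectangular shape `(n, n, n)`,
entries `1, ..., 3n` each used once, rows and columns strictly increasing. -/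
structure IsSYT3 (n : ℕ) (T : Fin 3 → Fin n → ℕ) : Prop where
  inj : Function.Injective (fun p : Fin 3 × Fin n => T p.1 p.2)
  range_eq : (Set.range fun p : Fin 3 × Fin n => T p.1 p.2) = Set.Icc 1 (3 * n)
  row_inc : ∀ i : Fin 3, StrictMono (T i)
  col_inc : ∀ j : Fin n, StrictMono (fun i : Fin 3 => T i j)

/-- `(T1, T2, T3)` is a shifted standard Young tableau of shape `(n+2, n+1, n)`:
row `i` is indented `i - 1` columns; entries `1, ..., 3n+3` each used once,
rows strictly increasing, and (shifted) columns strictly increasing. -/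
structure IsShiftedSYT (n : ℕ) (T1 : Fin (n + 2) → ℕ) (T2 : Fin (n + 1) → ℕ)
    (T3 : Fin n → ℕ) : Prop where
  inj : Function.Injective (Sum.elim T1 (Sum.elim T2 T3))
  range_eq : Set.range (Sum.elim T1 (Sum.elim T2 T3)) = Set.Icc 1 (3 * n + 3)
  row1 : StrictMono T1
  row2 : StrictMono T2
  row3 : StrictMono T3
  col12 : ∀ j : Fin (n + 1), T1 j.succ < T2 j
  col23 : ∀ j : Fin n, T2 j.succ < T3 j

namespace S13

def cnt {m : ℕ} (g : Fin m → Fin 3) (i : Fin 3) : ℕ → ℕ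
  | 0 => 0
  | t + 1 => cnt g i t + (if h : t < m then (if g ⟨t, h⟩ = i then 1 else 0) else 0)

def Bal (m : ℕ) (v : Fin 3 → ℕ) (g : Fin m → Fin 3) : Prop :=
  (∀ t ≤ m, cnt g 1 t ≤ cnt g 0 t ∧ cnt g 2 t ≤ cnt g 1 t) ∧ ∀ i, cnt g i m = v i

instance (m : ℕ) (v : Fin 3 → ℕ) : DecidablePred (Bal m v) := by
  intro g; unfold Bal; infer_instance

noncomputable def M (m : ℕ) (v : Fin 3 → ℕ) : ℕ := Nat.card {g : Fin m → Fin 3 // Bal m v g}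

lemma cnt_init {m : ℕ} (g : Fin (m+1) → Fin 3) (i : Fin 3) :
    ∀ t ≤ m, cnt (Fin.init g) i t = cnt g i t := by
  intro t ht
  induction t with
  | zero => rfl
  | succ t ih =>
    have h1 : t < m := ht
    have h2 : t < m + 1 := by omega
    simp only [cnt, ih (by omega), dif_pos h1, dif_pos h2]
    rfl

lemma cnt_succ_last {m : ℕ} (g : Fin (m+1) → Fin 3) (i : Fin 3) :
    cnt g i (m+1) = cnt g i m + (if g (Fin.last m) = i then 1 else 0) := by
  simp only [cnt, dif_pos (Nat.lt_succ_self m)]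
  rfl

lemma cnt_snoc {m : ℕ} (g : Fin m → Fin 3) (r : Fin 3) (i : Fin 3) :
    ∀ t ≤ m, cnt (Fin.snoc g r) i t = cnt g i t := by
  intro t ht
  rw [← cnt_init (Fin.snoc g r) i t ht, Fin.init_snoc]

lemma M_eq_card (m : ℕ) (v : Fin 3 → ℕ) :
    M m v = (Finset.univ.filter fun g : Fin m → Fin 3 => Bal m v g).card := by
  rw [M, Nat.card_eq_fintype_card, Fintype.card_subtype]

/-- base case -/
lemma M_zero : M 0 (fun _ => 0) = 1 := by
  rw [M, Nat.card_eq_one_iff_unique]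
  constructor
  · constructor
    rintro ⟨g, _⟩ ⟨g', _⟩
    ext k
    exact absurd k.isLt (by omega)
  · refine ⟨⟨Fin.elim0, ?_, fun i => rfl⟩⟩
    intro t ht
    interval_cases t
    exact ⟨le_refl _, le_refl _⟩

/-- emptiness on invalid shapes -/
lemma M_empty_10 (m : ℕ) (v : Fin 3 → ℕ) (h : v 0 < v 1) : M m v = 0 := by
  rw [M, Nat.card_eq_zero]
  left
  constructor
  rintro ⟨g, hpre, hcnt⟩
  have := (hpre m le_rfl).1
  rw [hcnt 0, hcnt 1] at this
  omega

lemma M_empty_21 (m : ℕ) (v : Fin 3 → ℕ) (h : v 1 < v 2) : M m v = 0 := by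
  rw [M, Nat.card_eq_zero]
  left
  constructor
  rintro ⟨g, hpre, hcnt⟩
  have := (hpre m le_rfl).2
  rw [hcnt 1, hcnt 2] at this
  omega

/-- the fiber lemma -/
lemma fiber_card (m : ℕ) (v : Fin 3 → ℕ) (hv1 : v 1 ≤ v 0) (hv2 : v 2 ≤ v 1) (r : Fin 3) :
    (Finset.univ.filter fun g : Fin (m+1) → Fin 3 => Bal (m+1) v g ∧ g (Fin.last m) = r).card
      = if 0 < v r then M m (Function.update v r (v r - 1)) else 0 := by
  by_cases hr : 0 < v r
  · rw [if_pos hr, M_eq_card]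
    apply Finset.card_nbij' (fun g => Fin.init g) (fun g => Fin.snoc g r)
    · -- forward membership
      rintro g hg
      rw [Finset.mem_coe, Finset.mem_filter] at hg ⊢
      obtain ⟨-, ⟨hpre, hcnt⟩, hlast⟩ := hg
      refine ⟨Finset.mem_univ _, ?_, ?_⟩
      · intro t ht
        rw [cnt_init g 1 t ht, cnt_init g 0 t ht, cnt_init g 2 t ht]
        exact hpre t (by omega)
      · intro i
        rw [cnt_init g i m le_rfl]
        have h1 := cnt_succ_last g i
        rw [hcnt i, hlast] at h1
        by_cases hir : r = i
        · subst hir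
          rw [if_pos rfl] at h1
          rw [Function.update_self]
          omega
        · rw [if_neg hir] at h1
          rw [Function.update_of_ne (fun hh => hir hh.symm)]
          omega
    · -- backward membership
      rintro g hg
      rw [Finset.mem_coe, Finset.mem_filter] at hg ⊢
      obtain ⟨-, hpre, hcnt⟩ := hg
      have hsn : ∀ i, cnt (Fin.snoc g r) i (m+1) = v i := by
        intro i
        rw [cnt_succ_last, Fin.snoc_last, cnt_snoc g r i m le_rfl, hcnt i]
        by_cases hir : r = i
        · subst hir
          rw [if_pos rfl, Function.update_self]
          omega
        · rw [if_neg hir, Function.update_of_ne (fun hh => hir hh.symm)]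
          omega
      refine ⟨Finset.mem_univ _, ⟨?_, hsn⟩, Fin.snoc_last _ _⟩
      intro t ht
      rcases Nat.lt_succ_iff_lt_or_eq.mp (Nat.lt_succ_of_le ht) with h | h
      · have ht' : t ≤ m := by omega
        rw [cnt_snoc g r 1 t ht', cnt_snoc g r 0 t ht', cnt_snoc g r 2 t ht']
        exact hpre t ht'
      · subst h
        rw [hsn 0, hsn 1, hsn 2]
        exact ⟨hv1, hv2⟩
    · -- left inverse
      rintro g hg
      rw [Finset.mem_coe, Finset.mem_filter] at hg
      beta_reduce
      rw [← hg.2.2, Fin.snoc_init_self]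
    · -- right inverse
      rintro g _
      beta_reduce
      rw [Fin.init_snoc]
  · rw [if_neg hr]
    rw [Finset.card_eq_zero, Finset.eq_empty_iff_forall_notMem]
    rintro g hg
    rw [Finset.mem_filter] at hg
    obtain ⟨-, ⟨-, hcnt⟩, hlast⟩ := hg
    have h1 := cnt_succ_last g r
    rw [hcnt r, hlast, if_pos rfl] at h1
    omega

/-- recurrence -/
lemma M_rec (m : ℕ) (v : Fin 3 → ℕ) (hv1 : v 1 ≤ v 0) (hv2 : v 2 ≤ v 1) :
    M (m+1) v = ∑ r : Fin 3, if 0 < v r then M m (Function.update v r (v r - 1)) else 0 := by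
  rw [M_eq_card]
  rw [Finset.card_eq_sum_card_fiberwise
    (f := fun g : Fin (m+1) → Fin 3 => g (Fin.last m)) (t := Finset.univ)
    (fun x _ => Finset.mem_univ _)]
  rw [← Finset.sum_congr rfl (fun r _ => fiber_card m v hv1 hv2 r)]
  apply Finset.sum_congr rfl
  intro r _
  congr 1
  rw [Finset.filter_filter]


lemma cnt_eq_card {m : ℕ} (g : Fin m → Fin 3) (i : Fin 3) (t : ℕ) :
    cnt g i t = (Finset.univ.filter fun k : Fin m => g k = i ∧ (k : ℕ) < t).card := by
  induction t with
  | zero => simp [cnt]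
  | succ t ih =>
    have hsplit : (Finset.univ.filter fun k : Fin m => g k = i ∧ (k : ℕ) < t + 1)
        = (Finset.univ.filter fun k : Fin m => g k = i ∧ (k : ℕ) < t)
          ∪ (Finset.univ.filter fun k : Fin m => g k = i ∧ (k : ℕ) = t) := by
      rw [← Finset.filter_or]
      apply Finset.filter_congr
      intro k _
      constructor
      · rintro ⟨h1, h2⟩
        rcases Nat.lt_succ_iff_lt_or_eq.mp h2 with h | h
        · exact Or.inl ⟨h1, h⟩
        · exact Or.inr ⟨h1, h⟩
      · rintro (⟨h1, h2⟩ | ⟨h1, h2⟩) <;> exact ⟨h1, by omega⟩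
    have hdisj : Disjoint (Finset.univ.filter fun k : Fin m => g k = i ∧ (k : ℕ) < t)
        (Finset.univ.filter fun k : Fin m => g k = i ∧ (k : ℕ) = t) := by
      apply Finset.disjoint_filter_filter'
      rw [disjoint_iff_inf_le]
      intro k hk
      simp only [Pi.inf_apply, inf_Prop_eq] at hk
      omega
    rw [hsplit, Finset.card_union_of_disjoint hdisj, ← ih]
    simp only [cnt]
    congr 1
    by_cases h : t < m
    · rw [dif_pos h]
      by_cases hg : g ⟨t, h⟩ = i
      · rw [if_pos hg]
        symm
        rw [Finset.card_eq_one]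
        refine ⟨⟨t, h⟩, ?_⟩
        ext k
        simp only [Finset.mem_filter, Finset.mem_univ, true_and, Finset.mem_singleton]
        constructor
        · rintro ⟨h1, h2⟩; exact Fin.ext h2
        · rintro rfl; exact ⟨hg, rfl⟩
      · rw [if_neg hg]
        symm
        rw [Finset.card_eq_zero]
        ext k
        simp only [Finset.mem_filter, Finset.mem_univ, true_and, Finset.notMem_empty,
          iff_false, not_and]
        intro h1 h2
        exact hg (by rwa [show (⟨t, h⟩ : Fin m) = k from (Fin.ext h2.symm)])
    · rw [dif_neg h]
      symm
      rw [Finset.card_eq_zero]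
      ext k
      simp only [Finset.mem_filter, Finset.mem_univ, true_and, Finset.notMem_empty, iff_false,
        not_and]
      intro _ h2
      omega

lemma cnt_top {m : ℕ} (g : Fin m → Fin 3) (i : Fin 3) :
    cnt g i m = (Finset.univ.filter fun k : Fin m => g k = i).card := by
  rw [cnt_eq_card]
  congr 1
  apply Finset.filter_congr
  intro k _
  simp [k.isLt]


lemma card_filter_lt_iso {m k : ℕ} (s : Finset (Fin m)) (h : s.card = k) (j : Fin k) :
    (s.filter fun x => x < (s.orderIsoOfFin h j : Fin m)).card = (j : ℕ) := by
  have base : (Finset.univ.filter fun t : Fin k => t < j).card = (j:ℕ) := by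
    have : (Finset.univ.filter fun t : Fin k => t < j) = Finset.Iio j := by ext t; simp
    rw [this]; simp
  rw [← base]
  symm
  apply Finset.card_nbij (i := fun t => (s.orderIsoOfFin h t : Fin m))
  · intro t ht
    rw [Finset.mem_coe, Finset.mem_filter] at ht ⊢
    exact ⟨(s.orderIsoOfFin h t).2, by exact_mod_cast (s.orderIsoOfFin h).lt_iff_lt.mpr ht.2⟩
  · intro t _ t' _ htt
    exact (s.orderIsoOfFin h).injective (Subtype.ext htt)
  · intro x hx
    rw [Finset.coe_filter] at hx
    obtain ⟨hxs, hxlt⟩ := hx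
    refine ⟨(s.orderIsoOfFin h).symm ⟨x, hxs⟩, ?_, ?_⟩
    · simp only [Finset.coe_filter, Set.mem_setOf_eq, Finset.mem_univ, true_and]
      have : (s.orderIsoOfFin h) ((s.orderIsoOfFin h).symm ⟨x, hxs⟩) = ⟨x, hxs⟩ :=
        (s.orderIsoOfFin h).apply_symm_apply _
      rw [← (s.orderIsoOfFin h).lt_iff_lt, this]
      exact hxlt
    · simp [(s.orderIsoOfFin h).apply_symm_apply]

lemma card_filter_le_iso {m k : ℕ} (s : Finset (Fin m)) (h : s.card = k) (j : Fin k) :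
    (s.filter fun x => x ≤ (s.orderIsoOfFin h j : Fin m)).card = (j : ℕ) + 1 := by
  have base : (Finset.univ.filter fun t : Fin k => t ≤ j).card = (j:ℕ)+1 := by
    have : (Finset.univ.filter fun t : Fin k => t ≤ j) = Finset.Iic j := by ext t; simp
    rw [this]; simp
  rw [← base]
  symm
  apply Finset.card_nbij (i := fun t => (s.orderIsoOfFin h t : Fin m))
  · intro t ht
    rw [Finset.mem_coe, Finset.mem_filter] at ht ⊢
    exact ⟨(s.orderIsoOfFin h t).2, by exact_mod_cast (s.orderIsoOfFin h).le_iff_le.mpr ht.2⟩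
  · intro t _ t' _ htt
    exact (s.orderIsoOfFin h).injective (Subtype.ext htt)
  · intro x hx
    rw [Finset.coe_filter] at hx
    obtain ⟨hxs, hxlt⟩ := hx
    refine ⟨(s.orderIsoOfFin h).symm ⟨x, hxs⟩, ?_, ?_⟩
    · simp only [Finset.coe_filter, Set.mem_setOf_eq, Finset.mem_univ, true_and]
      have : (s.orderIsoOfFin h) ((s.orderIsoOfFin h).symm ⟨x, hxs⟩) = ⟨x, hxs⟩ :=
        (s.orderIsoOfFin h).apply_symm_apply _
      rw [← (s.orderIsoOfFin h).le_iff_le, this]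
      exact hxlt
    · simp [(s.orderIsoOfFin h).apply_symm_apply]


lemma upd0 (a b c x : ℕ) : Function.update ![a,b,c] 0 x = ![x,b,c] := by
  funext i; fin_cases i <;> simp [Function.update]
lemma upd1 (a b c x : ℕ) : Function.update ![a,b,c] 1 x = ![a,x,c] := by
  funext i; fin_cases i <;> simp [Function.update]
lemma upd2 (a b c x : ℕ) : Function.update ![a,b,c] 2 x = ![a,b,x] := by
  funext i; fin_cases i <;> simp [Function.update]

lemma M_formula (m : ℕ) : ∀ p q c : ℕ, 3*c+2*q+p = m →
    M m ![c+q+p, c+q, c] *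
        (Nat.factorial (c+q+p+2) * Nat.factorial (c+q+1) * Nat.factorial c)
      = Nat.factorial m * ((p+1)*(q+1)*(p+q+2)) := by
  induction m using Nat.strong_induction_on with
  | _ m IH =>
  intro p q c hm
  match m, hm with
  | 0, hm =>
    obtain ⟨rfl, rfl, rfl⟩ : p = 0 ∧ q = 0 ∧ c = 0 := by omega
    have hv : (![0+0+0, 0+0, 0] : Fin 3 → ℕ) = fun _ => 0 := by
      funext i; fin_cases i <;> rfl
    rw [hv, M_zero]
    norm_num [Nat.factorial]
  | m'+1, hm =>
    rw [M_rec m' _ (by simp) (by simp), Fin.sum_univ_three]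
    simp only [Matrix.cons_val_zero, Matrix.cons_val_one, Matrix.head_cons,
      Matrix.cons_val_two, Matrix.tail_cons, upd0, upd1, upd2]
    set T0 := if 0 < c+q+p then M m' ![c+q+p-1, c+q, c] else 0 with hT0def
    set T1 := if 0 < c+q then M m' ![c+q+p, c+q-1, c] else 0 with hT1def
    set T2 := if 0 < c then M m' ![c+q+p, c+q, c-1] else 0 with hT2def
    -- uniform multiplied identities
    have e0 : T0 * (Nat.factorial (c+q+p+2) * Nat.factorial (c+q+1) * Nat.factorial c)
        = Nat.factorial m' * (p*(q+1)*(p+q+1)*(c+q+p+2)) := by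
      have ha : 0 < c+q+p := by omega
      rw [hT0def, if_pos ha]
      match p with
      | 0 =>
        rw [M_empty_10 m' _ (by simp; omega)]
        simp
      | p'+1 =>
        have h1 : c+q+(p'+1)-1 = c+q+p' := by omega
        rw [h1]
        have := IH m' (by omega) p' q c (by omega)
        have h2 : Nat.factorial (c+q+(p'+1)+2) = (c+q+p'+3) * Nat.factorial (c+q+p'+2) := by
          rw [show c+q+(p'+1)+2 = (c+q+p'+2)+1 by ring, Nat.factorial_succ]
        rw [h2]
        calc M m' ![c+q+p', c+q, c] *
              ((c+q+p'+3) * Nat.factorial (c+q+p'+2) * Nat.factorial (c+q+1) * Nat.factorial c)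
            = M m' ![c+q+p', c+q, c] *
              (Nat.factorial (c+q+p'+2) * Nat.factorial (c+q+1) * Nat.factorial c) * (c+q+p'+3) := by
              ring
          _ = Nat.factorial m' * ((p'+1)*(q+1)*(p'+q+2)) * (c+q+p'+3) := by rw [this]
          _ = Nat.factorial m' * ((p'+1)*(q+1)*(p'+q+2)*(c+q+p'+3)) := by ring
          _ = Nat.factorial m' * ((p'+1)*(q+1)*((p'+1)+q+1)*(c+q+(p'+1)+2)) := by ring_nf
    have e1 : T1 * (Nat.factorial (c+q+p+2) * Nat.factorial (c+q+1) * Nat.factorial c)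
        = Nat.factorial m' * ((p+2)*q*(p+q+2)*(c+q+1)) := by
      match q with
      | 0 =>
        by_cases hb : 0 < c + 0
        · rw [hT1def, if_pos hb, M_empty_21 m' _ (by simp; omega)]
          simp
        · rw [hT1def, if_neg hb]
          simp
      | q'+1 =>
        have hb : 0 < c+(q'+1) := by omega
        rw [hT1def, if_pos hb]
        have h1 : c+(q'+1)-1 = c+q' := by omega
        have h2 : c+(q'+1)+p = c+q'+(p+1) := by ring
        rw [h1, h2]
        have := IH m' (by omega) (p+1) q' c (by omega)
        have h3 : Nat.factorial (c+(q'+1)+1) = (c+q'+2) * Nat.factorial (c+q'+1) := by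
          rw [show c+(q'+1)+1 = (c+q'+1)+1 by ring, Nat.factorial_succ]
        rw [h3]
        calc M m' ![c+q'+(p+1), c+q', c] *
              (Nat.factorial (c+q'+(p+1)+2) * ((c+q'+2) * Nat.factorial (c+q'+1)) * Nat.factorial c)
            = M m' ![c+q'+(p+1), c+q', c] *
              (Nat.factorial (c+q'+(p+1)+2) * Nat.factorial (c+q'+1) * Nat.factorial c) * (c+q'+2) := by
              ring
          _ = Nat.factorial m' * ((p+1+1)*(q'+1)*(p+1+q'+2)) * (c+q'+2) := by rw [this]
          _ = Nat.factorial m' * ((p+2)*(q'+1)*(p+(q'+1)+2)*(c+(q'+1)+1)) := by ring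
    have e2 : T2 * (Nat.factorial (c+q+p+2) * Nat.factorial (c+q+1) * Nat.factorial c)
        = Nat.factorial m' * ((p+1)*(q+2)*(p+q+3)*c) := by
      match c with
      | 0 =>
        rw [hT2def, if_neg (by omega)]
        simp
      | c'+1 =>
        rw [hT2def, if_pos (by omega)]
        have h1 : c'+1-1 = c' := by omega
        have h2 : c'+1+q+p = c'+(q+1)+p := by ring
        have h2' : c'+1+q = c'+(q+1) := by ring
        rw [h1, h2, h2']
        have := IH m' (by omega) p (q+1) c' (by omega)
        have h3 : Nat.factorial (c'+1) = (c'+1) * Nat.factorial c' := Nat.factorial_succ c'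
        rw [h3]
        have h4 : c'+(q+1)+1 = c'+q+2 := by ring
        rw [h4]
        calc M m' ![c'+(q+1)+p, c'+(q+1), c'] *
              (Nat.factorial (c'+(q+1)+p+2) * Nat.factorial (c'+q+2) * ((c'+1) * Nat.factorial c'))
            = M m' ![c'+(q+1)+p, c'+(q+1), c'] *
              (Nat.factorial (c'+(q+1)+p+2) * Nat.factorial (c'+(q+1)+1) * Nat.factorial c') * (c'+1) := by
              rw [show c'+(q+1)+1 = c'+q+2 by ring]; ring
          _ = Nat.factorial m' * ((p+1)*(q+1+1)*(p+(q+1)+2)) * (c'+1) := by rw [this]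
          _ = Nat.factorial m' * ((p+1)*(q+2)*(p+q+3)*(c'+1)) := by ring
    rw [add_mul, add_mul, e0, e1, e2, Nat.factorial_succ m']
    rw [← hm]
    ring

variable {n : ℕ}

def S (g : Fin (3*n) → Fin 3) (i : Fin 3) : Finset (Fin (3*n)) :=
  Finset.univ.filter fun k => g k = i

lemma cnt_eq_card_S_lt (g : Fin (3*n) → Fin 3) (i : Fin 3) (y : Fin (3*n)) :
    cnt g i (y : ℕ) = ((S g i).filter fun x => x < y).card := by
  rw [cnt_eq_card]
  congr 1
  ext k
  simp only [Finset.mem_filter, Finset.mem_univ, true_and, S, Fin.lt_def]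

lemma cnt_eq_card_S_le (g : Fin (3*n) → Fin 3) (i : Fin 3) (y : Fin (3*n)) :
    cnt g i ((y : ℕ) + 1) = ((S g i).filter fun x => x ≤ y).card := by
  rw [cnt_eq_card]
  congr 1
  ext k
  simp only [Finset.mem_filter, Finset.mem_univ, true_and, S, Fin.le_def]
  constructor
  · rintro ⟨h1, h2⟩; exact ⟨h1, by omega⟩
  · rintro ⟨h1, h2⟩; exact ⟨h1, by omega⟩

lemma card_S (g : Fin (3*n) → Fin 3) (hg : Bal (3*n) ![n,n,n] g) (i : Fin 3) :
    (S g i).card = n := by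
  rw [S, ← cnt_top, hg.2 i]
  fin_cases i <;> simp

/-- the tableau associated to a ballot word -/
noncomputable def tab (g : Fin (3*n) → Fin 3) (h : ∀ i, (S g i).card = n) :
    Fin 3 → Fin n → ℕ :=
  fun i j => (((S g i).orderIsoOfFin (h i) j : Fin (3*n)) : ℕ) + 1

lemma iso_mem (g : Fin (3*n) → Fin 3) (h : ∀ i, (S g i).card = n) (i : Fin 3) (j : Fin n) :
    g ((S g i).orderIsoOfFin (h i) j : Fin (3*n)) = i := by
  have := ((S g i).orderIsoOfFin (h i) j).2
  simp only [S, Finset.mem_filter] at this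
  exact this.2

lemma cnt_at_iso (g : Fin (3*n) → Fin 3) (h : ∀ i, (S g i).card = n) (i : Fin 3) (j : Fin n) :
    cnt g i (((S g i).orderIsoOfFin (h i) j : Fin (3*n)) : ℕ) = (j : ℕ) := by
  rw [cnt_eq_card_S_lt, card_filter_lt_iso]

lemma cnt_at_iso_succ (g : Fin (3*n) → Fin 3) (h : ∀ i, (S g i).card = n) (i : Fin 3) (j : Fin n) :
    cnt g i ((((S g i).orderIsoOfFin (h i) j : Fin (3*n)) : ℕ) + 1) = (j : ℕ) + 1 := by
  rw [cnt_eq_card_S_le, card_filter_le_iso]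

/-- column strictness for consecutive rows from ballot property -/
lemma tab_col_lt (g : Fin (3*n) → Fin 3) (hg : Bal (3*n) ![n,n,n] g)
    (h : ∀ i, (S g i).card = n) (i i' : Fin 3)
    (hcons : (i' : ℕ) = (i : ℕ) + 1) (j : Fin n) :
    tab g h i j < tab g h i' j := by
  set x := ((S g i).orderIsoOfFin (h i) j : Fin (3*n)) with hx
  set y := ((S g i').orderIsoOfFin (h i') j : Fin (3*n)) with hy
  have hcnt_y : cnt g i' ((y : ℕ) + 1) = (j : ℕ) + 1 := cnt_at_iso_succ g h i' j
  have hball : cnt g i' ((y:ℕ)+1) ≤ cnt g i ((y:ℕ)+1) := by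
    have h1 := hg.1 ((y:ℕ)+1) (by omega)
    fin_cases i <;> fin_cases i' <;> simp_all <;> omega
  -- position y is an i'-position, not i
  have hne : g y ≠ i := by
    rw [iso_mem g h i' j]
    intro hc
    rw [hc] at hcons
    omega
  have hstep : cnt g i ((y:ℕ)+1) = cnt g i (y:ℕ) := by
    have hlt : (y:ℕ) < 3*n := y.isLt
    simp only [cnt, dif_pos hlt]
    have : (⟨(y:ℕ), hlt⟩ : Fin (3*n)) = y := by ext; rfl
    rw [this, if_neg hne]
    omega
  have hge : (j:ℕ) + 1 ≤ cnt g i (y:ℕ) := by omega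
  -- conclude x < y
  have hxy : x < y := by
    by_contra hcon
    push_neg at hcon -- y ≤ x
    have hsub : ((S g i).filter fun z => z < y) ⊆ ((S g i).filter fun z => z < x) := by
      intro z hz
      rw [Finset.mem_filter] at hz ⊢
      exact ⟨hz.1, lt_of_lt_of_le hz.2 hcon⟩
    have h1 : cnt g i (y:ℕ) ≤ (j:ℕ) := by
      rw [cnt_eq_card_S_lt]
      calc ((S g i).filter fun z => z < y).card ≤ ((S g i).filter fun z => z < x).card :=
            Finset.card_le_card hsub
        _ = (j:ℕ) := card_filter_lt_iso _ _ _
    omega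
  show (x:ℕ) + 1 < (y:ℕ) + 1
  have := Fin.lt_def.mp hxy
  omega




lemma tab_isSYT3 (g : Fin (3*n) → Fin 3) (hg : Bal (3*n) ![n,n,n] g)
    (h : ∀ i, (S g i).card = n) : IsSYT3 n (tab g h) := by
  constructor
  · -- injectivity
    rintro ⟨i, j⟩ ⟨i', j'⟩ he
    simp only [tab] at he
    have he2 : ((S g i).orderIsoOfFin (h i) j : Fin (3*n))
        = ((S g i').orderIsoOfFin (h i') j' : Fin (3*n)) := by
      ext; omega
    have hi : i = i' := by
      rw [← iso_mem g h i j, ← iso_mem g h i' j', he2]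
    subst hi
    have hj : j = j' := ((S g i).orderIsoOfFin (h i)).injective (Subtype.ext he2)
    rw [hj]
  · -- range
    ext v
    simp only [Set.mem_range, Set.mem_Icc, Prod.exists]
    constructor
    · rintro ⟨i, j, rfl⟩
      simp only [tab]
      have := (((S g i).orderIsoOfFin (h i) j : Fin (3*n))).isLt
      omega
    · rintro ⟨hv1, hv2⟩
      set k : Fin (3*n) := ⟨v - 1, by omega⟩ with hk
      refine ⟨g k, ((S g (g k)).orderIsoOfFin (h (g k))).symm ⟨k, ?_⟩, ?_⟩
      · simp [S]
      · simp only [tab]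
        rw [OrderIso.apply_symm_apply]
        simp [hk]
        omega
  · -- rows
    intro i j j' hjj
    simp only [tab]
    have : ((S g i).orderIsoOfFin (h i) j : Fin (3*n))
        < ((S g i).orderIsoOfFin (h i) j' : Fin (3*n)) := by
      exact_mod_cast ((S g i).orderIsoOfFin (h i)).lt_iff_lt.mpr hjj
    rw [Fin.lt_def] at this
    omega
  · -- columns
    intro j i i' hii
    have h01 : tab g h 0 j < tab g h 1 j := tab_col_lt g hg h 0 1 rfl j
    have h12 : tab g h 1 j < tab g h 2 j := tab_col_lt g hg h 1 2 rfl j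
    fin_cases i <;> fin_cases i' <;> simp_all <;> omega


lemma tab_inj (g g' : Fin (3*n) → Fin 3)
    (h : ∀ i, (S g i).card = n) (h' : ∀ i, (S g' i).card = n)
    (he : tab g h = tab g' h') : g = g' := by
  funext k
  -- k is in S g (g k); find its index j
  have hk : k ∈ S g (g k) := by simp [S]
  set j := ((S g (g k)).orderIsoOfFin (h (g k))).symm ⟨k, hk⟩ with hj
  have h1 : tab g h (g k) j = (k : ℕ) + 1 := by
    simp only [tab, hj, OrderIso.apply_symm_apply]
  have h2 : tab g' h' (g k) j = (k : ℕ) + 1 := by rw [← he, h1]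
  simp only [tab] at h2
  have h3 : ((S g' (g k)).orderIsoOfFin (h' (g k)) j : Fin (3*n)) = k := by ext; omega
  have h4 := iso_mem g' h' (g k) j
  rw [h3] at h4
  exact h4.symm

lemma tab_surj (T : Fin 3 → Fin n → ℕ) (hT : IsSYT3 n T) :
    ∃ g : Fin (3*n) → Fin 3, ∃ hg : Bal (3*n) ![n,n,n] g,
      tab g (card_S g hg) = T := by
  classical
  have hrange : ∀ i j, 1 ≤ T i j ∧ T i j ≤ 3*n := by
    intro i j
    have : T i j ∈ Set.Icc 1 (3*n) := by
      rw [← hT.range_eq]; exact ⟨(i, j), rfl⟩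
    exact this
  have hex : ∀ k : Fin (3*n), ∃ pr : Fin 3 × Fin n, T pr.1 pr.2 = (k:ℕ)+1 := by
    intro k
    have : ((k:ℕ)+1) ∈ Set.Icc 1 (3*n) := by
      have := k.isLt; simp
    rw [← hT.range_eq] at this
    obtain ⟨pr, hpr⟩ := this
    exact ⟨pr, hpr⟩
  choose P hP using hex
  set g : Fin (3*n) → Fin 3 := fun k => (P k).1 with hgdef
  have huniq : ∀ (i : Fin 3) (j : Fin n) (k : Fin (3*n)), T i j = (k:ℕ)+1 → P k = (i, j) := by
    intro i j k hk
    have := hT.inj (a₁ := (i,j)) (a₂ := P k) (by simp only; rw [hP k, hk])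
    exact this.symm
  set e : Fin 3 → Fin n → Fin (3*n) := fun i j => ⟨T i j - 1, by have := hrange i j; omega⟩
    with hedef
  have hTe : ∀ i j, T i j = ((e i j : Fin (3*n)) : ℕ) + 1 := by
    intro i j; have := hrange i j; simp only [hedef]; omega
  have hPe : ∀ i j, P (e i j) = (i, j) := fun i j => huniq i j (e i j) (hTe i j)
  have hge : ∀ i j, g (e i j) = i := by intro i j; rw [hgdef]; simp only; rw [hPe]
  have hSg : ∀ i, S g i = Finset.image (e i) Finset.univ := by
    intro i
    ext k
    simp only [S, Finset.mem_filter, Finset.mem_univ, true_and, Finset.mem_image]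
    constructor
    · intro hk
      refine ⟨(P k).2, ?_⟩
      have hTk : T i (P k).2 = (k:ℕ)+1 := by
        conv_lhs => rw [← hk, hgdef]
        exact hP k
      have := hrange i (P k).2
      simp only [hedef]
      ext
      simp only
      omega
    · rintro ⟨j, rfl⟩
      exact hge i j
  have heinj : ∀ i, Function.Injective (e i) := by
    intro i j j' hjj
    have h1 : T i j = T i j' := by rw [hTe i j, hTe i j', hjj]
    exact (hT.row_inc i).injective h1
  have hcard : ∀ i, (S g i).card = n := by
    intro i
    rw [hSg i, Finset.card_image_of_injective _ (heinj i), Finset.card_univ, Fintype.card_fin]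
  have hemono : ∀ i, StrictMono (e i) := by
    intro i j j' hjj
    have h1 := hT.row_inc i hjj
    have h2 := hrange i j
    simp only [hedef, Fin.lt_def]
    omega
  have htab : tab g hcard = T := by
    funext i j
    have hemem : ∀ x : Fin n, e i x ∈ S g i := by
      intro x; rw [hSg]; exact Finset.mem_image_of_mem _ (Finset.mem_univ x)
    have hu : e i = ⇑((S g i).orderEmbOfFin (hcard i)) :=
      Finset.orderEmbOfFin_unique (hcard i) hemem (hemono i)
    simp only [tab]
    rw [Finset.coe_orderIsoOfFin_apply, ← hu, ← hTe]
  -- ballot property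
  have hcnt_lt : ∀ (i : Fin 3) (t : ℕ), cnt g i t
      = (Finset.univ.filter fun j : Fin n => T i j ≤ t).card := by
    intro i t
    rw [cnt_eq_card]
    symm
    apply Finset.card_nbij (i := fun j => e i j)
    · intro j hj
      rw [Finset.mem_coe, Finset.mem_filter] at hj ⊢
      beta_reduce
      refine ⟨Finset.mem_univ _, hge i j, ?_⟩
      have := hTe i j
      omega
    · intro a _ b _ hab
      exact heinj i hab
    · intro k hk
      simp only [Finset.coe_filter, Set.mem_setOf_eq, Finset.mem_univ, true_and] at hk
      obtain ⟨hki, hkt⟩ := hk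
      have hkS : k ∈ S g i := by simp [S, hki]
      rw [hSg] at hkS
      rw [Finset.mem_image] at hkS
      obtain ⟨j, -, rfl⟩ := hkS
      refine ⟨j, ?_, rfl⟩
      simp only [Finset.coe_filter, Set.mem_setOf_eq, Finset.mem_univ, true_and]
      have := hTe i j
      omega
  have hbal : Bal (3*n) ![n,n,n] g := by
    constructor
    · intro t ht
      rw [hcnt_lt 0 t, hcnt_lt 1 t, hcnt_lt 2 t]
      constructor
      · apply Finset.card_le_card
        intro j hj
        rw [Finset.mem_filter] at hj ⊢
        refine ⟨Finset.mem_univ _, le_trans (le_of_lt ?_) hj.2⟩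
        exact hT.col_inc j (show (0 : Fin 3) < 1 by decide)
      · apply Finset.card_le_card
        intro j hj
        rw [Finset.mem_filter] at hj ⊢
        refine ⟨Finset.mem_univ _, le_trans (le_of_lt ?_) hj.2⟩
        exact hT.col_inc j (show (1 : Fin 3) < 2 by decide)
    · intro i
      rw [cnt_top, ← S, hcard]
      fin_cases i <;> simp
  exact ⟨g, hbal, by rw [← htab]⟩

/-- Main cardinality identity -/
lemma card_syt (n : ℕ) :
    Nat.card {T : Fin 3 → Fin n → ℕ // IsSYT3 n T} = M (3*n) ![n,n,n] := by
  symm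
  apply Nat.card_eq_of_bijective
    (f := fun g : {g : Fin (3*n) → Fin 3 // Bal (3*n) ![n,n,n] g} =>
      (⟨tab g.1 (card_S g.1 g.2), tab_isSYT3 g.1 g.2 (card_S g.1 g.2)⟩ :
        {T : Fin 3 → Fin n → ℕ // IsSYT3 n T}))
  constructor
  · rintro ⟨g, hg⟩ ⟨g', hg'⟩ he
    simp only [Subtype.mk.injEq] at he
    exact Subtype.ext (tab_inj g g' _ _ he)
  · rintro ⟨T, hT⟩
    obtain ⟨g, hg, htab⟩ := tab_surj T hT
    exact ⟨⟨g, hg⟩, Subtype.ext htab⟩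



end S13

/-- `|SYT(n, n, n)| = 2 (3n)! / (n! (n+1)! (n+2)!)`. -/
theorem stmt13 (n : ℕ) :
    Nat.card {T : Fin 3 → Fin n → ℕ // IsSYT3 n T} *
      (Nat.factorial n * Nat.factorial (n + 1) * Nat.factorial (n + 2)) =
      2 * Nat.factorial (3 * n) := by
  rw [S13.card_syt n]
  have h := S13.M_formula (3*n) 0 0 n (by omega)
  norm_num at h
  rw [show Nat.factorial n * Nat.factorial (n+1) * Nat.factorial (n+2)
      = Nat.factorial (n+2) * Nat.factorial (n+1) * Nat.factorial n by ring, h]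
  ring
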